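/- Coordinate explosion: let R̄ be a partial shape, F ⊆ D downward closed, d ∈ F, and c : dep(d) → ℕ compatible with R̄. Writing R̄_ℓ = R̄ ∪ {(d,c) ↦ ℓ} and U = {c' ∈ C(F; R̄) | c'|dep(d) = c}, the coordinate space over F with respect to R̄_ℓ equals (C(F; R̄) \ U) ∪ ⋃_{i=0}^{ℓ-1} {c' ∪ {d ↦ i} | c' ∈ U}. -/

import Mathlib

open Classical

/-- The (principal) dependency space of a dimension: all strict ancestors. -/
def dep {D : Type} (prec : D → D → Prop) (d : D) : Set D := {e | prec e d}

/-- Restriction of a partial function (modeled via `Option`) to a set. -/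
noncomputable def restrict {D : Type} (c : D → Option ℕ) (S : Set D) : D → Option ℕ :=
  fun e => if e ∈ S then c e else none

/-- Domain of a partial function. -/
def pdom {D : Type} (c : D → Option ℕ) : Set D := {e | c e ≠ none}

/-- A resolution map sends pairs `(d, c)` with `c` total exactly on `dep d` to lengths. -/
def ResMapOk {D : Type} (prec : D → D → Prop) (R : D → (D → Option ℕ) → Option ℕ) : Prop :=
  ∀ d c, R d c ≠ none → pdom c = dep prec d

/-- The in-bounds condition `ib(R; c)`. -/
def ib {D : Type} (prec : D → D → Prop) (R : D → (D → Option ℕ) → Option ℕ)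
    (c : D → Option ℕ) : Prop :=
  ∀ d v, c d = some v → ∃ ℓ, R d (restrict c (dep prec d)) = some ℓ ∧ v < ℓ

/-- A partial shape: every resolution present is in-bounds. -/
def IsPartialShape {D : Type} (prec : D → D → Prop)
    (R : D → (D → Option ℕ) → Option ℕ) : Prop :=
  ResMapOk prec R ∧ ∀ d c, R d c ≠ none → ib prec R c

/-- A (complete) shape: membership in the domain is equivalent to in-boundedness. -/
def IsShape {D : Type} (prec : D → D → Prop)
    (R : D → (D → Option ℕ) → Option ℕ) : Prop :=
  ResMapOk prec R ∧ ∀ d c, pdom c = dep prec d → (R d c ≠ none ↔ ib prec R c)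

/-- Compatibility of a pair `(d, c)` with a partial shape. -/
def compat {D : Type} (prec : D → D → Prop) (R : D → (D → Option ℕ) → Option ℕ)
    (d : D) (c : D → Option ℕ) : Prop :=
  pdom c = dep prec d ∧ ib prec R c ∧ R d c = none

/-- Extending a resolution map by one resolution `(d, c) ↦ ℓ`. -/
noncomputable def extend {D : Type} (R : D → (D → Option ℕ) → Option ℕ)
    (d : D) (c : D → Option ℕ) (ℓ : ℕ) : D → (D → Option ℕ) → Option ℕ :=
  fun d' c' => if d' = d ∧ c' = c then some ℓ else R d' c'

/-- Downward closedness of a set with respect to a relation. -/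
def DownClosed {D : Type} (prec : D → D → Prop) (F : Set D) : Prop :=
  ∀ a b, prec a b → b ∈ F → a ∈ F

/-- A coordinate with unknowns over a (downward closed) set `F`. -/
def CoordU {D : Type} (prec : D → D → Prop) (R : D → (D → Option ℕ) → Option ℕ)
    (F : Set D) (c : D → Option ℕ) : Prop :=
  pdom c ⊆ F ∧ ib prec R c ∧ ∀ e ∈ F, c e = none → R e (restrict c (dep prec e)) = none

/-- Coordinate explosion: adding a compatible resolution `(d, c) ↦ ℓ` replaces the
coordinates matching `c` on `dep d` by their `ℓ` explosions along `d`. -/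
theorem stmt10 {D : Type} [Fintype D] (prec : D → D → Prop)
    [IsIrrefl D prec] [IsTrans D prec]
    (R : D → (D → Option ℕ) → Option ℕ) (hR : IsPartialShape prec R)
    (F : Set D) (hF : DownClosed prec F) (d : D) (hd : d ∈ F)
    (c : D → Option ℕ) (hc : compat prec R d c) (ℓ : ℕ) :
    {c' | CoordU prec (extend R d c ℓ) F c'} =
      ({c' | CoordU prec R F c'} \
        {c' | CoordU prec R F c' ∧ restrict c' (dep prec d) = c}) ∪
      ⋃ i ∈ Finset.range ℓ,
        (fun c' : D → Option ℕ => fun e => if e = d then some i else c' e) ''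
          {c' | CoordU prec R F c' ∧ restrict c' (dep prec d) = c} := by
  classical
  obtain ⟨hRok, hRib⟩ := hR
  obtain ⟨hcdom, hcib, hcnone⟩ := hc
  have hdd : d ∉ dep prec d := fun h => irrefl d h
  have hdepsub : ∀ e, prec d e → dep prec d ⊆ dep prec e :=
    fun e hde x hx => IsTrans.trans x d e hx hde
  have hextpos : extend R d c ℓ d c = some ℓ := by
    unfold extend; rw [if_pos ⟨rfl, rfl⟩]
  have hextneg : ∀ d' x, ¬(d' = d ∧ x = c) → extend R d c ℓ d' x = R d' x := by
    intro d' x h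
    unfold extend; rw [if_neg h]
  have hextne : ∀ d' x, d' ≠ d → extend R d c ℓ d' x = R d' x :=
    fun d' x h => hextneg d' x (fun hh => h hh.1)
  have hrr : ∀ (x : D → Option ℕ) (e), prec d e →
      restrict (restrict x (dep prec e)) (dep prec d) = restrict x (dep prec d) := by
    intro x e hde
    funext y
    by_cases hy : y ∈ dep prec d
    · simp [restrict, hy, hdepsub e hde hy]
    · simp [restrict, hy]
  have key : ∀ (e : D) (x : D → Option ℕ) (v : ℕ), x d = some v →
      restrict x (dep prec d) = c → R e x = none := by
    intro e x v hxd hxc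
    by_contra h
    obtain ⟨ℓ', hℓ', _⟩ := hRib e x h d v hxd
    rw [hxc, hcnone] at hℓ'
    exact nomatch hℓ'
  ext c'
  simp only [Set.mem_setOf_eq, Set.mem_union, Set.mem_diff, Set.mem_iUnion,
    Finset.mem_range, Set.mem_image, exists_prop]
  constructor
  · rintro ⟨hsub, hib, hnone⟩
    by_cases hmatch : restrict c' (dep prec d) = c
    · -- explosion case
      right
      obtain ⟨i, hdi⟩ : ∃ i, c' d = some i := by
        cases hcd : c' d with
        | some i => exact ⟨i, rfl⟩
        | none =>
          have := hnone d hd hcd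
          rw [hmatch, hextpos] at this
          exact nomatch this
      have hiℓ : i < ℓ := by
        obtain ⟨ℓ0, hℓ0, hlt⟩ := hib d i hdi
        rw [hmatch, hextpos] at hℓ0
        cases hℓ0
        exact hlt
      have hup : ∀ e, e ≠ d → prec d e → c' e = none := by
        intro e hed hde
        by_contra h
        obtain ⟨v, hv⟩ := Option.ne_none_iff_exists'.mp h
        obtain ⟨ℓ', hℓ', _⟩ := hib e v hv
        rw [hextne e _ hed] at hℓ'
        have hxd : restrict c' (dep prec e) d = some i := by
          show (if d ∈ dep prec e then c' d else none) = some i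
          rw [if_pos (show d ∈ dep prec e from hde), hdi]
        have := key e (restrict c' (dep prec e)) i hxd (by rw [hrr c' e hde, hmatch])
        rw [this] at hℓ'
        exact nomatch hℓ'
      refine ⟨i, hiℓ, fun e => if e = d then none else c' e, ⟨⟨?_, ?_, ?_⟩, ?_⟩, ?_⟩
      · intro e he
        replace he : (if e = d then none else c' e) ≠ none := he
        by_cases hed : e = d
        · exact hed ▸ hd
        · rw [if_neg hed] at he
          exact hsub he
      · intro e v hev
        replace hev : (if e = d then none else c' e) = some v := hev
        by_cases hed : e = d
        · rw [if_pos hed] at hev; exact nomatch hev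
        · rw [if_neg hed] at hev
          have hnde : ¬ prec d e := fun h => by
            rw [hup e hed h] at hev; exact nomatch hev
          have hre : restrict (fun e => if e = d then none else c' e) (dep prec e)
              = restrict c' (dep prec e) := by
            funext y
            by_cases hy : y ∈ dep prec e
            · have hyd : y ≠ d := fun h => hnde (h ▸ hy)
              simp [restrict, hy, hyd]
            · simp [restrict, hy]
          rw [hre]
          obtain ⟨ℓ', hℓ', hlt⟩ := hib e v hev
          rw [hextne e _ hed] at hℓ'
          exact ⟨ℓ', hℓ', hlt⟩
      · intro e he hev
        replace hev : (if e = d then none else c' e) = none := hev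
        by_cases hed : e = d
        · subst hed
          have hrc : restrict (fun e' => if e' = e then none else c' e') (dep prec e) = c := by
            rw [← hmatch]
            funext y
            by_cases hy : y ∈ dep prec e
            · have hyd : y ≠ e := fun h => hdd (h ▸ hy)
              simp [restrict, hy, hyd]
            · simp [restrict, hy]
          rw [hrc]
          exact hcnone
        · rw [if_neg hed] at hev
          by_cases hde : d ∈ dep prec e
          · by_contra h
            have hpd := hRok e _ h
            have hdp : d ∈ pdom (restrict (fun e => if e = d then none else c' e)
                (dep prec e)) := by rw [hpd]; exact hde
            have : restrict (fun e => if e = d then none else c' e) (dep prec e) d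
                = none := by
              show (if d ∈ dep prec e then (if d = d then none else c' d) else none) = none
              rw [if_pos hde, if_pos rfl]
            exact hdp this
          · have hre : restrict (fun e => if e = d then none else c' e) (dep prec e)
                = restrict c' (dep prec e) := by
              funext y
              by_cases hy : y ∈ dep prec e
              · have hyd : y ≠ d := fun h => hde (h ▸ hy)
                simp [restrict, hy, hyd]
              · simp [restrict, hy]
            rw [hre]
            have := hnone e he hev
            rw [hextne e _ hed] at this
            exact this
      · rw [← hmatch]
        funext y
        by_cases hy : y ∈ dep prec d
        · have hyd : y ≠ d := fun h => hdd (h ▸ hy)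
          simp [restrict, hy, hyd]
        · simp [restrict, hy]
      · funext e
        show (if e = d then some i else if e = d then none else c' e) = c' e
        by_cases hed : e = d
        · rw [if_pos hed, hed, hdi]
        · rw [if_neg hed, if_neg hed]
    · -- unchanged case
      left
      refine ⟨⟨hsub, ?_, ?_⟩, fun h => hmatch h.2⟩
      · intro e v hev
        obtain ⟨ℓ', hℓ', hlt⟩ := hib e v hev
        by_cases hif : e = d ∧ restrict c' (dep prec e) = c
        · exact absurd (hif.1 ▸ hif.2) hmatch
        · rw [hextneg e _ hif] at hℓ'
          exact ⟨ℓ', hℓ', hlt⟩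
      · intro e he hev
        have := hnone e he hev
        by_cases hif : e = d ∧ restrict c' (dep prec e) = c
        · exact absurd (hif.1 ▸ hif.2) hmatch
        · rw [hextneg e _ hif] at this
          exact this
  · rintro (⟨⟨hsub, hib, hnone⟩, hnm⟩ | ⟨i, hi, c'', ⟨⟨hsub, hib, hnone⟩, hmatch⟩, rfl⟩)
    · have hmatch : restrict c' (dep prec d) ≠ c :=
        fun h => hnm ⟨⟨hsub, hib, hnone⟩, h⟩
      refine ⟨hsub, ?_, ?_⟩
      · intro e v hev
        obtain ⟨ℓ', hℓ', hlt⟩ := hib e v hev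
        refine ⟨ℓ', ?_, hlt⟩
        rw [hextneg e _ (by rintro ⟨rfl, hrc⟩; exact hmatch hrc)]
        exact hℓ'
      · intro e he hev
        rw [hextneg e _ (by rintro ⟨rfl, hrc⟩; exact hmatch hrc)]
        exact hnone e he hev
    · -- image case
      have hc''d : c'' d = none := by
        cases hcd : c'' d with
        | none => rfl
        | some w =>
          obtain ⟨ℓ', hℓ', _⟩ := hib d w hcd
          rw [hmatch, hcnone] at hℓ'
          exact nomatch hℓ'
      have hup : ∀ e, prec d e → c'' e = none := by
        intro e hde
        cases hce : c'' e with
        | none => rfl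
        | some v =>
          obtain ⟨ℓ', hℓ', _⟩ := hib e v hce
          have hpd := hRok e _ (show R e (restrict c'' (dep prec e)) ≠ none by
            rw [hℓ']; exact fun h => nomatch h)
          have hdp : d ∈ pdom (restrict c'' (dep prec e)) := by
            rw [hpd]; exact hde
          have : restrict c'' (dep prec e) d = none := by
            show (if d ∈ dep prec e then c'' d else none) = none
            rw [if_pos (show d ∈ dep prec e from hde), hc''d]
          exact (hdp this).elim
      have hrd : restrict (fun e => if e = d then some i else c'' e) (dep prec d) = c := by
        rw [← hmatch]
        funext y
        by_cases hy : y ∈ dep prec d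
        · have hyd : y ≠ d := fun h => hdd (h ▸ hy)
          simp [restrict, hy, hyd]
        · simp [restrict, hy]
      refine ⟨?_, ?_, ?_⟩
      · intro e he
        replace he : (if e = d then some i else c'' e) ≠ none := he
        by_cases hed : e = d
        · exact hed ▸ hd
        · rw [if_neg hed] at he
          exact hsub he
      · intro e v hev
        replace hev : (if e = d then some i else c'' e) = some v := hev
        by_cases hed : e = d
        · subst hed
          rw [if_pos rfl] at hev
          cases hev
          refine ⟨ℓ, ?_, hi⟩
          rw [hrd, hextpos]
        · rw [if_neg hed] at hev
          have hnde : ¬ prec d e := fun h => by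
            rw [hup e h] at hev; exact nomatch hev
          have hre : restrict (fun e => if e = d then some i else c'' e) (dep prec e)
              = restrict c'' (dep prec e) := by
            funext y
            by_cases hy : y ∈ dep prec e
            · have hyd : y ≠ d := fun h => hnde (h ▸ hy)
              simp [restrict, hy, hyd]
            · simp [restrict, hy]
          rw [hre, hextne e _ hed]
          exact hib e v hev
      · intro e he hev
        replace hev : (if e = d then some i else c'' e) = none := hev
        have hed : e ≠ d := by
          intro h
          rw [if_pos h] at hev
          exact nomatch hev
        rw [if_neg hed] at hev
        rw [hextne e _ hed]
        by_cases hde : d ∈ dep prec e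
        · have hxd : restrict (fun e => if e = d then some i else c'' e) (dep prec e) d
              = some i := by
            show (if d ∈ dep prec e then (if d = d then some i else c'' d) else none) = some i
            rw [if_pos hde, if_pos rfl]
          exact key e _ i hxd (by rw [hrr _ e hde, hrd])
        · have hre : restrict (fun e => if e = d then some i else c'' e) (dep prec e)
              = restrict c'' (dep prec e) := by
            funext y
            by_cases hy : y ∈ dep prec e
            · have hyd : y ≠ d := fun h => hde (h ▸ hy)
              simp [restrict, hy, hyd]
            · simp [restrict, hy]
          rw [hre]
          exact hnone e he hev
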